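/- The derived multiset ordering of a quasi-order is itself a quasi-order: if ≥ₓ is reflexive and transitive on X, then the derived multiset ordering ≥_{M(X)} on finite multisets of X is reflexive and transitive. -/
import Mathlib


attribute [local instance] Classical.propDecidable

/-- The derived multiset quasi-ordering of a relation `r`: `T ≥ U` iff `U = ∅`,
or some `t ∈ T` and `u ∈ U` are `≈`-equal (in both directions of `r`) and
`T − t ≥ U − u`, or some `t ∈ T` satisfies `T − t ≥ U` minus all elements
strictly below `t`. -/
inductive MulGE {α : Type} (r : α → α → Prop) : Multiset α → Multiset α → Prop where
  | empty (T : Multiset α) : MulGE r T 0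
  | cancel {T U : Multiset α} (t u : α) (ht : t ∈ T) (hu : u ∈ U)
      (h1 : r t u) (h2 : r u t) (h : MulGE r (T.erase t) (U.erase u)) : MulGE r T U
  | dominate {T U : Multiset α} (t : α) (ht : t ∈ T)
      (h : MulGE r (T.erase t) (U.filter (fun u => ¬ (r t u ∧ ¬ r u t)))) : MulGE r T U

/-- Semantic characterization of `MulGE`. -/
def MSChar {α : Type} (r : α → α → Prop) (T U : Multiset α) : Prop :=
  ∃ T₁ T₂ U₁ U₂ : Multiset α, T = T₁ + T₂ ∧ U = U₁ + U₂ ∧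
    Multiset.Rel (fun t u => r t u ∧ r u t) T₁ U₁ ∧
    ∀ u ∈ U₂, ∃ t ∈ T₂, r t u ∧ ¬ r u t

theorem mulGE_to_char {α : Type} {r : α → α → Prop} {T U : Multiset α}
    (h : MulGE r T U) : MSChar r T U := by
  induction h with
  | empty T =>
    exact ⟨0, T, 0, 0, by simp, by simp, Multiset.Rel.zero, by simp⟩
  | @cancel T U t u ht hu h1 h2 h ih =>
    obtain ⟨T₁, T₂, U₁, U₂, hT, hU, hrel, hdom⟩ := ih
    refine ⟨t ::ₘ T₁, T₂, u ::ₘ U₁, U₂, ?_, ?_, Multiset.Rel.cons ⟨h1, h2⟩ hrel, hdom⟩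
    · rw [Multiset.cons_add, ← hT, Multiset.cons_erase ht]
    · rw [Multiset.cons_add, ← hU, Multiset.cons_erase hu]
  | @dominate T U t ht h ih =>
    obtain ⟨T₁, T₂, U₁, U₂, hT, hU, hrel, hdom⟩ := ih
    refine ⟨T₁, t ::ₘ T₂, U₁, U₂ + U.filter (fun u => ¬ ¬ (r t u ∧ ¬ r u t)),
      ?_, ?_, hrel, ?_⟩
    · rw [add_comm T₁, Multiset.cons_add, add_comm T₂, ← hT, Multiset.cons_erase ht]
    · rw [← add_assoc, ← hU]
      exact (Multiset.filter_add_not (fun u => ¬(r t u ∧ ¬ r u t)) _).symm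
    · intro u hu
      rcases Multiset.mem_add.1 hu with hu | hu
      · obtain ⟨x, hx, hx2⟩ := hdom u hu
        exact ⟨x, Multiset.mem_cons_of_mem hx, hx2⟩
      · obtain ⟨-, h'⟩ := Multiset.mem_filter.1 hu
        exact ⟨t, Multiset.mem_cons_self t T₂, not_not.1 h'⟩

theorem mulGE_dom {α : Type} {r : α → α → Prop} (T₂ : Multiset α) :
    ∀ U₂ : Multiset α, (∀ u ∈ U₂, ∃ t ∈ T₂, r t u ∧ ¬ r u t) → MulGE r T₂ U₂ := by
  induction T₂ using Multiset.induction with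
  | empty =>
    intro U₂ h
    have : U₂ = 0 := Multiset.eq_zero_of_forall_notMem (fun u hu => by
      obtain ⟨t, ht, -⟩ := h u hu; exact absurd ht (Multiset.notMem_zero t))
    rw [this]; exact MulGE.empty 0
  | cons a T₂ ih =>
    intro U₂ h
    refine MulGE.dominate a (Multiset.mem_cons_self a T₂) ?_
    rw [Multiset.erase_cons_head]
    refine ih _ (fun u hu => ?_)
    obtain ⟨hu1, hu2⟩ := Multiset.mem_filter.1 hu
    obtain ⟨t, ht, ht2⟩ := h u hu1
    rcases Multiset.mem_cons.1 ht with rfl | ht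
    · exact absurd ht2 hu2
    · exact ⟨t, ht, ht2⟩

theorem char_to_mulGE {α : Type} {r : α → α → Prop} {T U : Multiset α}
    (h : MSChar r T U) : MulGE r T U := by
  obtain ⟨T₁, T₂, U₁, U₂, rfl, rfl, hrel, hdom⟩ := h
  have base : MulGE r T₂ U₂ := mulGE_dom T₂ U₂ hdom
  clear hdom
  induction hrel with
  | zero => simpa using base
  | @cons a b T₁ U₁ hab hrel ih =>
    rw [Multiset.cons_add, Multiset.cons_add]
    refine MulGE.cancel a b (Multiset.mem_cons_self _ _) (Multiset.mem_cons_self _ _)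
      hab.1 hab.2 ?_
    rw [Multiset.erase_cons_head, Multiset.erase_cons_head]
    exact ih

/-- Riesz decomposition for multisets. -/
theorem multiset_riesz {α : Type} {X Y Z W : Multiset α} (h : X + Y = Z + W) :
    ∃ A B C D : Multiset α, X = A + B ∧ Y = C + D ∧ Z = A + C ∧ W = B + D := by
  classical
  refine ⟨X ∩ Z, X - X ∩ Z, Z - X ∩ Z, Y - (Z - X ∩ Z), ?_, ?_, ?_, ?_⟩ <;>
  · ext x
    have h' := congrArg (Multiset.count x) h
    simp only [Multiset.count_add] at h'
    simp only [Multiset.count_sub, Multiset.count_inter, Multiset.count_add]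
    omega

/-- The derived multiset ordering of a quasi-order is itself a quasi-order:
it is reflexive and transitive on finite multisets. -/
theorem stmt_7 {α : Type} (r : α → α → Prop)
    (hrefl : ∀ x, r x x) (htrans : ∀ x y z, r x y → r y z → r x z) :
    (∀ T : Multiset α, MulGE r T T) ∧
    (∀ T U V : Multiset α, MulGE r T U → MulGE r U V → MulGE r T V) := by
  constructor
  · intro T
    refine char_to_mulGE ⟨T, 0, T, 0, by simp, by simp, ?_, by simp⟩
    refine (Multiset.rel_eq.2 rfl).mono (fun a _ b _ hab => ?_)
    subst hab; exact ⟨hrefl a, hrefl a⟩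
  · intro T U V hTU hUV
    obtain ⟨T₁, T₂, U₁, U₂, hT, hU, hrel₁, hdom₁⟩ := mulGE_to_char hTU
    obtain ⟨U₁', U₂', V₁, V₂, hU', hV, hrel₂, hdom₂⟩ := mulGE_to_char hUV
    -- U₁ + U₂ = U₁' + U₂'
    have hUU : U₁' + U₂' = U₁ + U₂ := by rw [← hU, ← hU']
    obtain ⟨A, B, C, D, hU₁', hU₂', hU₁, hU₂⟩ := multiset_riesz hUU
    -- split T₁ along U₁ = A + C
    rw [hU₁] at hrel₁
    obtain ⟨Ta, Tc, hTa, hTc, hT₁⟩ := Multiset.rel_add_right.1 hrel₁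
    -- split V₁ along U₁' = A + B
    rw [hU₁'] at hrel₂
    obtain ⟨Va, Vb, hVa, hVb, hV₁⟩ := Multiset.rel_add_left.1 hrel₂
    refine char_to_mulGE ⟨Ta, Tc + T₂, Va, Vb + V₂, ?_, ?_, ?_, ?_⟩
    · rw [hT, hT₁, add_assoc]
    · rw [hV, hV₁, add_assoc]
    · -- Rel of composition: Ta ≈ A ≈ Va
      have : IsTrans α (fun t u => r t u ∧ r u t) :=
        ⟨fun a b c hab hbc => ⟨htrans _ _ _ hab.1 hbc.1, htrans _ _ _ hbc.2 hab.2⟩⟩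
      exact Multiset.Rel.trans _ hTa hVa
    · intro v hv
      rcases Multiset.mem_add.1 hv with hv | hv
      · -- v ∈ Vb : v ≈ some b ∈ B ⊆ U₂, and b is strictly below some t ∈ T₂
        obtain ⟨b, hb, hbv⟩ :=
          Multiset.exists_mem_of_rel_of_mem (Multiset.rel_flip.2 hVb) hv
        have hbU₂ : b ∈ U₂ := by rw [hU₂]; exact Multiset.mem_add.2 (Or.inl hb)
        obtain ⟨t, ht, ht1, ht2⟩ := hdom₁ b hbU₂
        refine ⟨t, Multiset.mem_add.2 (Or.inr ht), htrans _ _ _ ht1 hbv.1, fun hvt => ?_⟩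
        exact ht2 (htrans _ _ _ hbv.1 hvt)
      · -- v ∈ V₂ : v strictly below some u' ∈ U₂' = C + D
        obtain ⟨u', hu', hu1, hu2⟩ := hdom₂ v hv
        rw [hU₂'] at hu'
        rcases Multiset.mem_add.1 hu' with hc | hd
        · -- u' ∈ C : u' ≈ some t ∈ Tc
          obtain ⟨t, ht, htu⟩ :=
            Multiset.exists_mem_of_rel_of_mem (Multiset.rel_flip.2 hTc) hc
          refine ⟨t, Multiset.mem_add.2 (Or.inl ht),
            htrans _ _ _ htu.1 hu1, fun hvt => ?_⟩
          exact hu2 (htrans _ _ _ hvt htu.1)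
        · -- u' ∈ D ⊆ U₂ : u' strictly below some t ∈ T₂
          have hdU₂ : u' ∈ U₂ := by rw [hU₂]; exact Multiset.mem_add.2 (Or.inr hd)
          obtain ⟨t, ht, ht1, ht2⟩ := hdom₁ u' hdU₂
          refine ⟨t, Multiset.mem_add.2 (Or.inr ht),
            htrans _ _ _ ht1 hu1, fun hvt => ?_⟩
          exact hu2 (htrans _ _ _ hvt ht1)
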